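/- Assume the matrix C := ((α_i,α_j))_{1 ≤ i,j ≤ l} is invertible and set h₁ := (1/2) ∑_{i,j=1}^l (C^{-1})_{ij} u_i^{(0)} u_j^{(0)} ∈ π₀. Then for every i ∈ {0, …, l}, Q_i(h₁) = −u_i^{(0)} = ∂(1) − u_i^{(0)}·1; in particular Q_i(h₁) lies in the image of the twisted derivative P ↦ ∂P − u_i^{(0)}P for every i, so the local functional ∫h₁ is a Toda integral (it lies in the kernel of each induced operator Q̄_i). -/
import Mathlib


open MvPolynomial

noncomputable section

/-- The algebra of differential polynomials in the variables `u_i^{(n)}`, `1 ≤ i ≤ l`, `n ≥ 0`. -/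
abbrev Pi0 (l : ℕ) : Type := MvPolynomial (Fin l × ℕ) ℂ

/-- The variable `u_i^{(n)}`. -/
def u {l : ℕ} (i : Fin l) (n : ℕ) : Pi0 l := X (i, n)

/-- The derivation `∂` with `∂ u_i^{(n)} = u_i^{(n+1)}`. -/
def pa (l : ℕ) : Derivation ℂ (Pi0 l) (Pi0 l) :=
  mkDerivation ℂ (fun p => X (p.1, p.2 + 1))

/-- An affine generalized Cartan matrix of size `(l+1) × (l+1)`: an indecomposable integer
matrix with `a_{ii} = 2`, `a_{ij} ≤ 0` for `i ≠ j`, `a_{ij} = 0 ↔ a_{ji} = 0`, symmetrizable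
by positive rationals `d_i`, and admitting a vector of positive integer labels `(a_0,…,a_l)`
with `∑_j a_j a_{ij} = 0` for all `i`. -/
structure AffineGCM (l : ℕ) where
  A : Matrix (Fin (l+1)) (Fin (l+1)) ℤ
  diag : ∀ i, A i i = 2
  offdiag : ∀ i j, i ≠ j → A i j ≤ 0
  zeroIff : ∀ i j, A i j = 0 ↔ A j i = 0
  d : Fin (l+1) → ℚ
  d_pos : ∀ i, 0 < d i
  dsymm : ∀ i j, d i * A i j = d j * A j i
  label : Fin (l+1) → ℕ
  label_pos : ∀ i, 0 < label i
  null : ∀ i, ∑ j, (label j : ℤ) * A i j = 0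
  indec : ∀ S : Set (Fin (l+1)), (∀ i ∈ S, ∀ j ∉ S, A i j = 0) → S = ∅ ∨ S = Set.univ

namespace AffineGCM

variable {l : ℕ} (K : AffineGCM l)

/-- The symmetrized bilinear form `(α_i, α_j) := d_i a_{ij}`. -/
def B (i j : Fin (l+1)) : ℂ := (K.d i : ℂ) * (K.A i j : ℂ)

/-- `u_j^{(n)}` for `j = 0,…,l`, where `u_0^{(n)} := -(1/a_0) ∑_{i=1}^l a_i u_i^{(n)}`.
Here `j = 0` is `Fin.cases`' zero case and `j = i.succ` corresponds to `u_i^{(n)}`. -/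
def Uv (j : Fin (l+1)) (n : ℕ) : Pi0 l :=
  Fin.cases (-(1 / (K.label 0 : ℂ)) • ∑ i : Fin l, (K.label i.succ : ℂ) • u i n)
    (fun i => u i n) j

/-- The Faà di Bruno polynomials: `B_i^{(0)} = 1`,
`B_i^{(n+1)} = -u_i^{(0)} B_i^{(n)} + ∂ B_i^{(n)}`. -/
def FdB (i : Fin (l+1)) : ℕ → Pi0 l
  | 0 => 1
  | n+1 => -(K.Uv i 0) * FdB i n + pa l (FdB i n)

/-- The unique `ℂ`-derivation `Q_i` of `π₀` with `Q_i u_j^{(n)} = -(α_i,α_j) B_i^{(n)}`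
for `1 ≤ j ≤ l`, `n ≥ 0`. -/
def Q (i : Fin (l+1)) : Derivation ℂ (Pi0 l) (Pi0 l) :=
  mkDerivation ℂ (fun p => -(K.B i p.1.succ) • K.FdB i p.2)

end AffineGCM

/-- The matrix `C = ((α_i,α_j))_{1 ≤ i,j ≤ l}`. -/
def Cmat {l : ℕ} (K : AffineGCM l) : Matrix (Fin l) (Fin l) ℂ :=
  Matrix.of fun i j => K.B i.succ j.succ

/-- `h₁ := (1/2) ∑_{i,j=1}^l (C⁻¹)_{ij} u_i^{(0)} u_j^{(0)}`. -/
def hOne {l : ℕ} (K : AffineGCM l) : Pi0 l :=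
  (1/2 : ℂ) • ∑ i : Fin l, ∑ j : Fin l, (Cmat K)⁻¹ i j • (u i 0 * u j 0)

section Aux
open Matrix
variable {l : ℕ} (K : AffineGCM l)

lemma Bsymm (i j : Fin (l+1)) : K.B i j = K.B j i := by
  have h := congrArg (fun q : ℚ => (q : ℂ)) (K.dsymm i j)
  unfold AffineGCM.B
  push_cast at h
  exact h

lemma Cmat_symm : (Cmat K).transpose = Cmat K := by
  ext i j; exact Bsymm K j.succ i.succ

lemma Cinv_symm (j k : Fin l) : (Cmat K)⁻¹ j k = (Cmat K)⁻¹ k j := by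
  have h : ((Cmat K)⁻¹).transpose = (Cmat K)⁻¹ := by
    rw [Matrix.transpose_nonsing_inv, Cmat_symm]
  conv_lhs => rw [← h]
  rfl

lemma nullB (j : Fin (l+1)) : ∑ m, (K.label m : ℂ) * K.B m j = 0 := by
  have h : ∀ m, (K.label m : ℂ) * K.B m j
      = (K.d j : ℂ) * ((K.label m : ℂ) * (K.A j m : ℂ)) := by
    intro m; rw [Bsymm]; unfold AffineGCM.B; ring
  have h2 : ∑ m, (K.label m : ℂ) * (K.A j m : ℂ)
      = ((∑ m, (K.label m : ℤ) * K.A j m : ℤ) : ℂ) := by push_cast; ring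
  simp_rw [h, ← Finset.mul_sum, h2, K.null j, Int.cast_zero, mul_zero]

lemma Q_u (i : Fin (l+1)) (j : Fin l) :
    K.Q i (u j 0) = C (-(K.B i j.succ)) := by
  show (mkDerivation ℂ (fun p : Fin l × ℕ => -(K.B i p.1.succ) • K.FdB i p.2)) (X (j, 0)) = _
  rw [mkDerivation_X]
  simp [AffineGCM.FdB, MvPolynomial.smul_eq_C_mul]

end Aux

lemma Q_hOne {l : ℕ} (K : AffineGCM l) (i : Fin (l+1)) :
    K.Q i (hOne K)
      = ∑ k : Fin l, (-(∑ j : Fin l, (Cmat K)⁻¹ k j * K.B i j.succ)) • u k 0 := by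
  have key : ∀ j k : Fin l, K.Q i (u j 0 * u k 0)
      = (-(K.B i k.succ)) • u j 0 + (-(K.B i j.succ)) • u k 0 := by
    intro j k
    rw [Derivation.leibniz, smul_eq_mul, smul_eq_mul, Q_u, Q_u,
      MvPolynomial.smul_eq_C_mul, MvPolynomial.smul_eq_C_mul]
    ring
  unfold hOne
  rw [Derivation.map_smul, map_sum]
  simp_rw [map_sum, Derivation.map_smul, key, smul_add, Finset.sum_add_distrib, smul_smul]
  have hS2 : (∑ x : Fin l, ∑ y : Fin l, ((Cmat K)⁻¹ x y * -K.B i x.succ) • u y 0)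
      = ∑ x : Fin l, ∑ y : Fin l, ((Cmat K)⁻¹ x y * -K.B i y.succ) • u x 0 := by
    rw [Finset.sum_comm]
    refine Finset.sum_congr rfl fun x _ => Finset.sum_congr rfl fun y _ => ?_
    rw [Cinv_symm]
  rw [hS2, ← two_smul ℂ, smul_smul]
  norm_num
  exact Finset.sum_congr rfl fun x _ => Finset.sum_smul.symm

lemma inv_dot {l : ℕ} (K : AffineGCM l) (hdet : IsUnit (Cmat K).det) (k m : Fin l) :
    ∑ j, (Cmat K)⁻¹ k j * K.B m.succ j.succ = if k = m then 1 else 0 := by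
  have h : ∀ j : Fin l, K.B m.succ j.succ = Cmat K j m := fun j => Bsymm K m.succ j.succ
  simp_rw [h]
  rw [← Matrix.mul_apply, Matrix.nonsing_inv_mul _ hdet, Matrix.one_apply]


/-- if `C = ((α_i,α_j))_{1≤i,j≤l}` is invertible then for every `i = 0,…,l`,
`Q_i(h₁) = −u_i^{(0)} = ∂(1) − u_i^{(0)}·1`; in particular `Q_i(h₁)` lies in the image of
the twisted derivative `P ↦ ∂P − u_i^{(0)} P`, so `∫ h₁` is a Toda integral. -/
theorem h1_is_toda_integral_density (l : ℕ) (hl : 1 ≤ l) (K : AffineGCM l)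
    (hdet : IsUnit (Cmat K).det) :
    ∀ i : Fin (l+1),
      K.Q i (hOne K) = -(K.Uv i 0) ∧
      ∃ S : Pi0 l, K.Q i (hOne K) = pa l S - K.Uv i 0 * S := by

  intro i
  have ha : (K.label 0 : ℂ) ≠ 0 := by exact_mod_cast (K.label_pos 0).ne'
  have main : K.Q i (hOne K) = -(K.Uv i 0) := by
    rw [Q_hOne]
    induction i using Fin.cases with
    | zero =>
      have hB0 : ∀ j : Fin l, K.B 0 j.succ
          = -(1/(K.label 0 : ℂ)) * ∑ m : Fin l, (K.label m.succ : ℂ) * K.B m.succ j.succ := by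
        intro j
        have h := nullB K j.succ
        rw [Fin.sum_univ_succ] at h
        field_simp
        linear_combination h
      have hsum : ∀ k : Fin l, ∑ j, (Cmat K)⁻¹ k j * K.B 0 j.succ
          = -(1/(K.label 0 : ℂ)) * (K.label k.succ : ℂ) := by
        intro k
        have step : ∑ j, (Cmat K)⁻¹ k j * K.B 0 j.succ
            = -(1/(K.label 0 : ℂ)) * ∑ m : Fin l, (K.label m.succ : ℂ)
                * ∑ j, (Cmat K)⁻¹ k j * K.B m.succ j.succ := by
          simp_rw [hB0, Finset.mul_sum]
          rw [Finset.sum_comm]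
          exact Finset.sum_congr rfl fun m _ => Finset.sum_congr rfl fun j _ => by ring
        rw [step]
        simp_rw [inv_dot K hdet, mul_ite, mul_one, mul_zero, Finset.sum_ite_eq]
        simp
      simp_rw [hsum]
      simp only [AffineGCM.Uv, Fin.cases_zero, neg_mul, neg_neg, neg_smul, Finset.smul_sum,
        smul_smul]
      simp
    | succ m =>
      simp_rw [inv_dot K hdet]
      simp [AffineGCM.Uv, apply_ite, Finset.sum_ite_eq]
  refine ⟨main, 1, ?_⟩
  rw [main]
  simp
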